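/- Let F be the free group on generators α_1,…,α_n,β and B = ⟨β⟩. If c = γλ is a reduced word with γ ∈ F ∖ B and λ ∈ B, then c is not conjugate in F to any reduced word of the form γ⁻¹λ' with λ' ∈ B. -/

import Mathlib

open FreeGroup List

namespace NCG

set_option linter.unusedSectionVars false
set_option maxHeartbeats 1000000



variable {α : Type*} [DecidableEq α]
set_option linter.unusedSectionVars false

/-- inverse of a letter -/
def linv (a : α × Bool) : α × Bool := (a.1, !a.2)

lemma linv_linv (a : α × Bool) : linv (linv a) = a := by
  cases a; simp [linv]

lemma ne_linv_self (a : α × Bool) : a ≠ linv a := by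
  cases a; simp [linv]

lemma linv_eq_iff {a b : α × Bool} : linv a = b ↔ a = linv b := by
  constructor <;> rintro rfl <;> simp [linv_linv]

/-- reduced word -/
def Red' (l : List (α × Bool)) : Prop := List.IsChain (fun a b => b ≠ linv a) l

lemma red'_nil : Red' ([] : List (α × Bool)) := List.isChain_nil

lemma red'_singleton (a : α × Bool) : Red' [a] := List.isChain_singleton a

lemma Red'.tail {l : List (α × Bool)} (h : Red' l) : Red' l.tail := List.IsChain.tail h

lemma not_chain'_decomp {R : (α × Bool) → (α × Bool) → Prop} :
    ∀ {l : List (α × Bool)}, ¬ List.IsChain R l →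
      ∃ l₁ a b l₂, l = l₁ ++ a :: b :: l₂ ∧ ¬ R a b := by
  intro l
  induction l with
  | nil => intro h; exact absurd List.isChain_nil h
  | cons x t ih =>
    intro h
    rw [List.isChain_cons] at h
    rcases Classical.em (List.IsChain R t) with ht | ht
    · have h' : ¬ ∀ y ∈ t.head?, R x y := fun hall => h ⟨hall, ht⟩
      push_neg at h'
      obtain ⟨y, hy, hR⟩ := h'
      cases t with
      | nil => simp at hy
      | cons z t' =>
        simp at hy
        subst hy
        exact ⟨[], x, z, t', rfl, hR⟩
    · obtain ⟨l₁, a, b, l₂, rfl, hR⟩ := ih ht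
      exact ⟨x :: l₁, a, b, l₂, rfl, hR⟩

lemma red'_reduce (l : List (α × Bool)) : Red' (FreeGroup.reduce l) := by
  by_contra h
  obtain ⟨l₁, a, b, l₂, hdec, hR⟩ := not_chain'_decomp h
  push_neg at hR
  subst hR
  obtain ⟨x, c⟩ := a
  exact FreeGroup.reduce.not (x := x) (b := c) (L₂ := l₁) (L₃ := l₂) hdec

lemma red'_toWord (x : FreeGroup α) : Red' x.toWord := by
  rw [← FreeGroup.reduce_toWord]; exact red'_reduce _

lemma reduce_eq_self_of_red' : ∀ {l : List (α × Bool)}, Red' l → FreeGroup.reduce l = l := by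
  intro l
  induction l with
  | nil => intro; rfl
  | cons x t ih =>
    intro h
    have ht : Red' t := h.tail
    rw [FreeGroup.reduce.cons, ih ht]
    cases t with
    | nil => rfl
    | cons hd tl =>
      have hx : hd ≠ linv x := (List.isChain_cons_cons.mp h).1
      have : ¬ (x.1 = hd.1 ∧ x.2 = !hd.2) := by
        rintro ⟨h1, h2⟩
        exact hx (by cases x; cases hd; simp only [linv]; simp_all)
      simp [this]

lemma toWord_mk_red' {l : List (α × Bool)} (h : Red' l) : (FreeGroup.mk l).toWord = l := by
  rw [FreeGroup.toWord_mk, reduce_eq_self_of_red' h]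

/-- cyclically reduced word -/
def CR (l : List (α × Bool)) : Prop :=
  Red' l ∧ ∀ a ∈ l.getLast?, ∀ b ∈ l.head?, b ≠ linv a


-- new material
lemma Red'.infix {l l₁ : List (α × Bool)} (h : Red' l) (h' : l₁ <:+: l) : Red' l₁ :=
  List.IsChain.infix h h'

lemma invRev_eq_map_reverse (l : List (α × Bool)) :
    FreeGroup.invRev l = (l.map linv).reverse := rfl

lemma red'_invRev {l : List (α × Bool)} (h : Red' l) : Red' (FreeGroup.invRev l) := by
  rw [invRev_eq_map_reverse, Red', List.isChain_reverse, List.isChain_map]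
  unfold Red' at h
  refine h.imp ?_
  intro a b hab hc
  rw [linv_linv] at hc
  exact hab hc.symm

lemma head?_invRev (l : List (α × Bool)) :
    (FreeGroup.invRev l).head? = l.getLast?.map linv := by
  rw [invRev_eq_map_reverse, List.head?_reverse, List.getLast?_map]

lemma getLast?_invRev (l : List (α × Bool)) :
    (FreeGroup.invRev l).getLast? = l.head?.map linv := by
  rw [invRev_eq_map_reverse, List.getLast?_reverse, List.head?_map]

lemma CR.rotate1 {l : List (α × Bool)} (h : CR l) : CR (l.rotate 1) := by
  cases l with
  | nil => simpa using h
  | cons a t =>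
    have hrot : (a :: t).rotate 1 = t ++ [a] := by
      rw [List.rotate_cons_succ, List.rotate_zero]
    rw [hrot]
    obtain ⟨hred, hwrap⟩ := h
    constructor
    · rw [Red', List.isChain_append]
      refine ⟨hred.tail, List.isChain_singleton a, ?_⟩
      intro x hx y hy
      simp only [List.head?_cons, Option.mem_def, Option.some.injEq] at hy
      subst hy
      cases t with
      | nil => simp at hx
      | cons c t' =>
        have : x ∈ (a :: c :: t').getLast? := by
          rw [List.getLast?_cons_cons]; exact hx
        exact hwrap x this a (by simp)
    · intro p hp q hq
      have hpl : p = a := by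
        rw [List.getLast?_concat] at hp
        have := hp; simp only [Option.mem_def, Option.some.injEq] at this
        exact this.symm
      rw [hpl]
      cases t with
      | nil =>
        have : q = a := by have := hq; simp only [List.nil_append, List.head?_cons, Option.mem_def, Option.some.injEq] at this; exact this.symm
        exact this ▸ ne_linv_self _
      | cons c t' =>
        have hqc : q = c := by
          have : (c :: t' ++ [a]).head? = some c := rfl
          rw [this] at hq; have := hq; simp only [Option.mem_def, Option.some.injEq] at this; exact this.symm
        subst hqc
        have := List.isChain_cons_cons.mp hred
        exact this.1

lemma CR.rotate {l : List (α × Bool)} (h : CR l) (r : ℕ) : CR (l.rotate r) := by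
  induction r generalizing l with
  | zero => simpa using h
  | succ n ih =>
    have : l.rotate (n + 1) = (l.rotate 1).rotate n := by
      rw [List.rotate_rotate]; ring_nf
    rw [this]
    exact ih h.rotate1

lemma red'_replicate (m : ℕ) (a : α × Bool) : Red' (List.replicate m a) := by
  induction m with
  | zero => exact List.isChain_nil
  | succ k ih =>
    rw [List.replicate_succ]
    refine List.isChain_cons.mpr ⟨?_, ih⟩
    intro y hy
    have : y = a := by
      cases k with
      | zero => simp at hy
      | succ k' => rw [List.replicate_succ] at hy; simp only [List.head?_cons,
          Option.mem_def, Option.some.injEq] at hy; exact hy.symm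
    exact this ▸ ne_linv_self _

def runB (x0 : α) (k : ℤ) : List (α × Bool) := List.replicate k.natAbs (x0, decide (0 < k))

lemma mk_replicate_true (x0 : α) (m : ℕ) :
    FreeGroup.mk (List.replicate m (x0, true)) = (FreeGroup.of x0) ^ m := by
  induction m with
  | zero => rfl
  | succ k ih =>
    rw [List.replicate_succ, ← List.singleton_append, ← FreeGroup.mul_mk, ih, pow_succ']
    rfl

lemma mk_replicate_false (x0 : α) (m : ℕ) :
    FreeGroup.mk (List.replicate m (x0, false)) = (FreeGroup.of x0)⁻¹ ^ m := by
  induction m with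
  | zero => rfl
  | succ k ih =>
    rw [List.replicate_succ, ← List.singleton_append, ← FreeGroup.mul_mk, ih, pow_succ']
    congr 1

lemma mk_runB (x0 : α) (k : ℤ) : FreeGroup.mk (runB x0 k) = (FreeGroup.of x0) ^ k := by
  rcases lt_trichotomy k 0 with hk | hk | hk
  · have h1 : decide (0 < k) = false := by simp; omega
    rw [runB, h1, mk_replicate_false, inv_pow, ← zpow_natCast, ← zpow_neg]
    congr 1
    omega
  · subst hk; rfl
  · have h1 : decide (0 < k) = true := by simpa
    rw [runB, h1, mk_replicate_true, ← zpow_natCast]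
    congr 1
    omega


section Gen


lemma mk_singleton_inv (g : α × Bool) :
    (FreeGroup.mk [g])⁻¹ = FreeGroup.mk [linv g] := by
  rw [FreeGroup.inv_mk]; rfl

lemma rotate_back {l m : List (α × Bool)} (h : m.rotate 1 = l) (hne : m ≠ []) :
    l.rotate (l.length - 1) = m := by
  have hlen : l.length = m.length := by rw [← h, List.length_rotate]
  rw [← h, List.rotate_rotate]
  have h2 : 1 + ((m.rotate 1).length - 1) = m.length := by
    rw [List.length_rotate]
    have := List.length_pos_iff.mpr hne
    omega
  rw [h2, List.rotate_length]

lemma invRev_cons_form {t : List (α × Bool)} (ht : t ≠ []) :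
    FreeGroup.invRev t = linv (t.getLast ht) :: FreeGroup.invRev t.dropLast := by
  conv_lhs => rw [← List.dropLast_append_getLast ht]
  rw [invRev_eq_map_reverse, List.map_append, List.reverse_append]
  simp [invRev_eq_map_reverse]

theorem rot_of_conj_aux (N : ℕ) :
    ∀ (w x y : FreeGroup α), w.toWord.length ≤ N → CR x.toWord → CR y.toWord →
      y = w⁻¹ * x * w → ∃ r, y.toWord = x.toWord.rotate r := by
  induction N with
  | zero =>
    intro w x y hlen _ _ heq
    have hw : w.toWord = [] := List.length_eq_zero_iff.mp (Nat.le_zero.mp hlen)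
    have : w = 1 := FreeGroup.toWord_eq_nil_iff.mp hw
    subst this
    refine ⟨0, ?_⟩
    rw [heq]
    simp
  | succ N ih =>
    intro w x y hlen hx hy heq
    by_cases hw1 : w.toWord = []
    · have : w = 1 := FreeGroup.toWord_eq_nil_iff.mp hw1
      subst this
      refine ⟨0, ?_⟩
      rw [heq]; simp
    cases hxw : x.toWord with
    | nil =>
      have hx1 : x = 1 := FreeGroup.toWord_eq_nil_iff.mp hxw
      subst hx1
      refine ⟨0, ?_⟩
      rw [heq]
      simp [hxw]
    | cons a xs =>
    cases hww : w.toWord with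
    | nil => exact absurd hww hw1
    | cons g t =>
    -- basic facts
    have hRedw : Red' (g :: t) := hww ▸ red'_toWord w
    have wmk : w = FreeGroup.mk (g :: t) := by
      conv_lhs => rw [← FreeGroup.mk_toWord (x := w), hww]
    have hRedt : Red' t := by
      have := Red'.tail hRedw; simpa using this
    have htE : (FreeGroup.mk t).toWord = t := toWord_mk_red' hRedt
    have hw_fact : w = FreeGroup.mk [g] * FreeGroup.mk t := by
      rw [wmk, FreeGroup.mul_mk]; rfl
    have hlent : t.length ≤ N := by
      have : w.toWord.length = t.length + 1 := by rw [hww]; simp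
      omega
    have hxmk : x = FreeGroup.mk (a :: xs) := by
      conv_lhs => rw [← FreeGroup.mk_toWord (x := x), hxw]
    have hxne : x.toWord ≠ [] := by rw [hxw]; simp
    -- head of t can't cancel g
    have jt : ∀ c ∈ t.head?, c ≠ linv g := by
      intro c hc
      have := List.isChain_cons.mp hRedw
      exact this.1 c hc
    by_cases hA1 : a = g
    · -- case A1 : conjugate rotates by 1
      subst hA1
      set x₁ := (FreeGroup.mk [a])⁻¹ * x * FreeGroup.mk [a] with hx₁def
      have hx1 : x₁ = FreeGroup.mk (xs ++ [a]) := by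
        rw [hx₁def, hxmk]
        have : FreeGroup.mk (a :: xs) = FreeGroup.mk [a] * FreeGroup.mk xs := by
          rw [FreeGroup.mul_mk]; rfl
        rw [this, ← FreeGroup.mul_mk]
        group
      have hrot1 : x.toWord.rotate 1 = xs ++ [a] := by
        rw [hxw, List.rotate_cons_succ, List.rotate_zero]
      have hCR1 : CR (xs ++ [a]) := hrot1 ▸ CR.rotate hx 1
      have hx1w : x₁.toWord = xs ++ [a] := by rw [hx1]; exact toWord_mk_red' hCR1.1
      have hy1 : y = (FreeGroup.mk t)⁻¹ * x₁ * FreeGroup.mk t := by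
        rw [heq, hw_fact, hx₁def]; group
      obtain ⟨r, hr⟩ := ih (FreeGroup.mk t) x₁ y (by rw [htE]; exact hlent)
        (by rw [hx1w]; exact hCR1) hy hy1
      exact ⟨1 + r, by rw [hr, hx1w, ← hrot1, List.rotate_rotate, hxw]⟩
    · by_cases hA2 : x.toWord.getLast (by rw [hxw]; simp) = linv g
      · -- case A2
        set ds := x.toWord.dropLast with hdsdef
        have hds : x.toWord = ds ++ [linv g] := by
          conv_lhs => rw [← List.dropLast_append_getLast (l := x.toWord) (by rw [hxw]; simp)]
          rw [hA2]
        set x₁ := (FreeGroup.mk [g])⁻¹ * x * FreeGroup.mk [g] with hx₁def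
        have hx1 : x₁ = FreeGroup.mk (linv g :: ds) := by
          have hxd : x = FreeGroup.mk ds * FreeGroup.mk [linv g] := by
            conv_lhs => rw [← FreeGroup.mk_toWord (x := x), hds, ← FreeGroup.mul_mk]
          have h2 : FreeGroup.mk (linv g :: ds) = FreeGroup.mk [linv g] * FreeGroup.mk ds := by
            rw [FreeGroup.mul_mk]; rfl
          rw [hx₁def, hxd, h2, ← mk_singleton_inv]
          group
        have hm1 : (linv g :: ds).rotate 1 = x.toWord := by
          rw [List.rotate_cons_succ, List.rotate_zero, ← hds]
        have hxrot : x.toWord.rotate (x.toWord.length - 1) = linv g :: ds :=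
          rotate_back hm1 (by simp)
        have hCR1 : CR (linv g :: ds) := hxrot ▸ CR.rotate hx _
        have hx1w : x₁.toWord = linv g :: ds := by rw [hx1]; exact toWord_mk_red' hCR1.1
        have hy1 : y = (FreeGroup.mk t)⁻¹ * x₁ * FreeGroup.mk t := by
          rw [heq, hw_fact, hx₁def]; group
        obtain ⟨r, hr⟩ := ih (FreeGroup.mk t) x₁ y (by rw [htE]; exact hlent)
          (by rw [hx1w]; exact hCR1) hy hy1
        exact ⟨(x.toWord.length - 1) + r, by rw [hr, hx1w, ← hxrot, List.rotate_rotate, hxw]⟩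
      · -- x-side failed; look at y
        -- w from the right
        set hh := w.toWord.getLast hw1 with hhdef
        set t' := w.toWord.dropLast with ht'def
        have hwsplit : w.toWord = t' ++ [hh] := (List.dropLast_append_getLast hw1).symm
        have hRedt' : Red' t' := Red'.infix (red'_toWord w) (List.dropLast_prefix _).isInfix
        have ht'E : (FreeGroup.mk t').toWord = t' := toWord_mk_red' hRedt'
        have hw_fact' : w = FreeGroup.mk t' * FreeGroup.mk [hh] := by
          conv_lhs => rw [← FreeGroup.mk_toWord (x := w), hwsplit]
          rw [FreeGroup.mul_mk]
        have hlent' : t'.length ≤ N := by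
          have h1 : w.toWord.length = t'.length + 1 := by rw [hwsplit]; simp
          omega
        have hyne : y ≠ 1 := by
          intro hy1
          rw [hy1] at heq
          have : x = 1 := by
            have := heq.symm
            calc x = w * (w⁻¹ * x * w) * w⁻¹ := by group
              _ = w * 1 * w⁻¹ := by rw [← heq]
              _ = 1 := by group
          rw [this] at hxw
          simp at hxw
        have hywne : y.toWord ≠ [] := fun hc => hyne (FreeGroup.toWord_eq_nil_iff.mp hc)
        cases hyw : y.toWord with
        | nil => exact absurd hyw hywne
        | cons b ys =>
        have hymk : y = FreeGroup.mk (b :: ys) := by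
          conv_lhs => rw [← FreeGroup.mk_toWord (x := y), hyw]
        have hy₁eq : FreeGroup.mk [hh] * y * (FreeGroup.mk [hh])⁻¹
            = (FreeGroup.mk t')⁻¹ * x * FreeGroup.mk t' := by
          rw [heq, hw_fact']; group
        by_cases hB1 : b = linv hh
        · -- case A1' : rotate y by 1
          subst hB1
          set y₁ := FreeGroup.mk [hh] * y * (FreeGroup.mk [hh])⁻¹ with hy₁def
          have hy1 : y₁ = FreeGroup.mk (ys ++ [linv hh]) := by
            have h1 : FreeGroup.mk (linv hh :: ys) = FreeGroup.mk [linv hh] * FreeGroup.mk ys := by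
              rw [FreeGroup.mul_mk]; rfl
            have h2 : FreeGroup.mk (ys ++ [linv hh]) = FreeGroup.mk ys * FreeGroup.mk [linv hh] := by
              rw [FreeGroup.mul_mk]
            rw [hy₁def, hymk, h1, h2, ← mk_singleton_inv]
            group
          have hrot1 : y.toWord.rotate 1 = ys ++ [linv hh] := by
            rw [hyw, List.rotate_cons_succ, List.rotate_zero]
          have hCR1 : CR (ys ++ [linv hh]) := hrot1 ▸ CR.rotate hy 1
          have hy1w : y₁.toWord = ys ++ [linv hh] := by rw [hy1]; exact toWord_mk_red' hCR1.1
          obtain ⟨r, hr⟩ := ih (FreeGroup.mk t') x y₁ (by rw [ht'E]; exact hlent')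
            hx (by rw [hy1w]; exact hCR1) hy₁eq
          -- y.toWord = y₁w.rotate (len-1)
          have hm1 : (linv hh :: ys).rotate 1 = ys ++ [linv hh] := by
            rw [List.rotate_cons_succ, List.rotate_zero]
          have hback : (ys ++ [linv hh]).rotate ((ys ++ [linv hh]).length - 1) = linv hh :: ys := by
            refine rotate_back ?_ (by simp)
            exact hm1
          refine ⟨r + ((ys ++ [linv hh]).length - 1), ?_⟩
          rw [← hxw, ← List.rotate_rotate, ← hr, hy1w, hback]
        · by_cases hB2 : y.toWord.getLast (by rw [hyw]; simp) = hh
          · -- case A2'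
            set es := y.toWord.dropLast with hesdef
            have hes : y.toWord = es ++ [hh] := by
              conv_lhs => rw [← List.dropLast_append_getLast (l := y.toWord) (by rw [hyw]; simp)]
              rw [hB2]
            set y₁ := FreeGroup.mk [hh] * y * (FreeGroup.mk [hh])⁻¹ with hy₁def
            have hy1 : y₁ = FreeGroup.mk (hh :: es) := by
              rw [hy₁def]
              have hyd : y = FreeGroup.mk es * FreeGroup.mk [hh] := by
                conv_lhs => rw [← FreeGroup.mk_toWord (x := y), hes]
                rw [FreeGroup.mul_mk]
              rw [hyd]
              have : FreeGroup.mk [hh] * (FreeGroup.mk es * FreeGroup.mk [hh]) * (FreeGroup.mk [hh])⁻¹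
                  = FreeGroup.mk [hh] * FreeGroup.mk es := by group
              rw [this, FreeGroup.mul_mk]
              rfl
            have hm1 : (hh :: es).rotate 1 = y.toWord := by
              rw [List.rotate_cons_succ, List.rotate_zero, ← hes]
            have hyrot : y.toWord.rotate (y.toWord.length - 1) = hh :: es :=
              rotate_back hm1 (by simp)
            have hCR1 : CR (hh :: es) := hyrot ▸ CR.rotate hy _
            have hy1w : y₁.toWord = hh :: es := by rw [hy1]; exact toWord_mk_red' hCR1.1
            obtain ⟨r, hr⟩ := ih (FreeGroup.mk t') x y₁ (by rw [ht'E]; exact hlent')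
              hx (by rw [hy1w]; exact hCR1) hy₁eq
            refine ⟨r + 1, ?_⟩
            have hm1' : (hh :: es).rotate 1 = b :: ys := by rw [hm1, hyw]
            rw [← hxw, ← List.rotate_rotate, ← hr, hy1w, hm1']
          · -- case B : contradiction
            exfalso
            set Z := FreeGroup.invRev t ++ ([linv g] ++ (x.toWord ++ ([g] ++ t))) with hZdef
            have hZred : Red' Z := by
              rw [hZdef, Red', List.isChain_append]
              refine ⟨red'_invRev hRedt, ?_, ?_⟩
              · rw [List.isChain_append]
                refine ⟨List.isChain_singleton _, ?_, ?_⟩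
                · rw [List.isChain_append]
                  refine ⟨red'_toWord x, ?_, ?_⟩
                  · rw [List.isChain_append]
                    refine ⟨List.isChain_singleton _, hRedt, ?_⟩
                    intro p hp q hq
                    have hpg : p = g := Eq.symm (by simpa using hp)
                    subst hpg
                    exact jt q hq
                  · intro p hp q hq
                    have hq1 : q = g := by
                      cases t with
                      | nil => exact Eq.symm (by simpa using hq)
                      | cons c t2 => exact Eq.symm (by simpa using hq)
                    subst hq1
                    have hplast : p = x.toWord.getLast (by rw [hxw]; simp) := by
                      rw [List.getLast?_eq_getLast (by rw [hxw]; simp)] at hp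
                      exact Eq.symm (by simpa using hp)
                    intro hc
                    apply hA2
                    rw [← hplast, linv_eq_iff.mp hc.symm]
                · intro p hp q hq
                  have hp1 : p = linv g := Eq.symm (by simpa using hp)
                  subst hp1
                  have hq1 : q = a := by rw [hxw] at hq; exact Eq.symm (by simpa using hq)
                  subst hq1
                  rw [linv_linv]
                  exact fun hc => hA1 hc
              · intro p hp q hq
                have hq1 : q = linv g := by
                  have h5 : ([linv g] ++ (x.toWord ++ ([g] ++ t))).head? = some (linv g) := rfl
                  rw [h5] at hq
                  exact Eq.symm (by simpa using hq)
                subst hq1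
                rw [getLast?_invRev] at hp
                obtain ⟨c, hc, rfl⟩ := Option.map_eq_some_iff.mp (Option.mem_def.mp hp)
                rw [linv_linv]
                exact fun hcc => (jt c hc) hcc.symm
            have hZsplit : FreeGroup.mk Z =
                (FreeGroup.mk t)⁻¹ * (FreeGroup.mk [g])⁻¹ * x * (FreeGroup.mk [g]) * FreeGroup.mk t := by
              rw [hZdef]
              rw [← FreeGroup.mul_mk, ← FreeGroup.mul_mk, ← FreeGroup.mul_mk, ← FreeGroup.mul_mk]
              rw [← mk_singleton_inv, ← FreeGroup.inv_mk, FreeGroup.mk_toWord]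
              group
            have hZy : y = FreeGroup.mk Z := by
              rw [heq, hw_fact, hZsplit]
              group
            have hyZ : y.toWord = Z := by rw [hZy]; exact toWord_mk_red' hZred
            -- head of Z is linv hh
            have hlastw : w.toWord.getLast? = some hh := by
              rw [hhdef]; exact List.getLast?_eq_getLast hw1
            have hlastw2 : (g :: t).getLast? = some hh := by rw [← hww]; exact hlastw
            have hhead : Z.head? = some (linv hh) := by
              by_cases ht : t = []
              · have hg : hh = g := by
                  rw [ht] at hlastw2
                  simpa using hlastw2.symm
                rw [hZdef, ht]
                simp only [FreeGroup.invRev, List.map_nil, List.reverse_nil, List.nil_append,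
                  List.cons_append, List.head?_cons]
                rw [hg]
              · have hg : hh = t.getLast ht := by
                  have h6 : (g :: t).getLast? = t.getLast? := by
                    cases t with
                    | nil => exact absurd rfl ht
                    | cons c t2 => rfl
                  rw [h6, List.getLast?_eq_getLast ht] at hlastw2
                  exact Eq.symm (by simpa using hlastw2)
                rw [hZdef, invRev_cons_form ht]
                rw [List.cons_append, List.head?_cons, hg]
            have hbval : (b :: ys).head? = some (linv hh) := by
              rw [← hyw, hyZ]; exact hhead
            have : b = linv hh := by simpa using hbval
            exact hB1 this
  
-- adjacency lemmas
lemma red'_adj {l : List (α × Bool)} (h : Red' l) {q : ℕ} (hq : q + 1 < l.length) :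
    l[q + 1]'hq ≠ linv (l[q]'(by omega)) := by
  have := List.isChain_iff_getElem.mp h q (by omega)
  simpa using this

lemma cr_wrap_ne {l : List (α × Bool)} (h : CR l) (hne : 0 < l.length) :
    l[0]'hne ≠ linv (l[l.length - 1]'(by omega)) := by
  have h1 : l.getLast? = some (l[l.length - 1]'(by omega)) := by
    rw [List.getLast?_eq_getLast (by intro hc; subst hc; simp at hne)]
    congr 1
    exact List.getLast_eq_getElem _
  have h2 : l.head? = some (l[0]'hne) := by
    rw [List.head?_eq_head (by intro hc; subst hc; simp at hne)]
    congr 1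
    exact List.head_eq_getElem_zero _
  exact h.2 _ (by rw [h1]; rfl) _ (by rw [h2]; rfl)

lemma cycAdj {l : List (α × Bool)} (h : CR l) {q q' : ℕ} (hq : q < l.length)
    (hq' : q' < l.length) (hcond : q' = q + 1 ∨ (q + 1 = l.length ∧ q' = 0)) :
    l[q']'hq' ≠ linv (l[q]'hq) := by
  rcases hcond with hc | ⟨hc1, hc2⟩
  · subst hc
    exact red'_adj h.1 hq'
  · subst hc2
    have : q = l.length - 1 := by omega
    subst this
    exact cr_wrap_ne h (by omega)

/-- cyclic reduction exists -/
theorem exists_cyc_red_aux (M : ℕ) :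
    ∀ x : FreeGroup α, x.toWord.length ≤ M →
      ∃ z v : FreeGroup α, z = v⁻¹ * x * v ∧ CR z.toWord ∧
        z.toWord.length ≤ x.toWord.length := by
  induction M with
  | zero =>
    intro x hx
    refine ⟨x, 1, by group, ?_, le_rfl⟩
    have : x.toWord = [] := List.length_eq_zero_iff.mp (Nat.le_zero.mp hx)
    rw [this]
    exact ⟨List.isChain_nil, by simp⟩
  | succ M ih =>
    intro x hx
    by_cases hcr : CR x.toWord
    · exact ⟨x, 1, by group, hcr, le_rfl⟩
    · -- wrap must fail
      have hred : Red' x.toWord := red'_toWord x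
      have hwrap : ∃ la ∈ x.toWord.getLast?, ∃ hb ∈ x.toWord.head?, hb = linv la := by
        by_contra hc
        push_neg at hc
        exact hcr ⟨hred, fun a ha b hb => hc a ha b hb⟩
      obtain ⟨la, hla, hb, hhb, hcancel⟩ := hwrap
      cases hxw : x.toWord with
      | nil => rw [hxw] at hla; simp at hla
      | cons a rest =>
        rw [hxw] at hla hhb
        have hba : a = hb := by simpa using hhb
        subst hba
        cases hrest : rest with
        | nil =>
          subst hrest
          have h9 : la = a := Eq.symm (by simpa using hla)
          rw [h9] at hcancel
          exact absurd hcancel (ne_linv_self a)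
        | cons c rest2 =>
          have hrne : rest ≠ [] := by rw [hrest]; simp
          have hlast : la = rest.getLast hrne := by
            have h6 : (a :: rest).getLast? = rest.getLast? := by
              rw [hrest]; rfl
            rw [h6, List.getLast?_eq_getLast hrne] at hla
            exact Eq.symm (by simpa using hla)
          -- x.toWord = a :: (mid ++ [linv a])
          set mid := rest.dropLast with hmiddef
          have hrest2 : rest = mid ++ [linv a] := by
            conv_lhs => rw [← List.dropLast_append_getLast hrne]
            rw [← hlast, linv_eq_iff.mp hcancel.symm]
          have hxsplit : x.toWord = [a] ++ mid ++ [linv a] := by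
            rw [hxw, hrest2]; rfl
          have hmidred : Red' mid := by
            refine Red'.infix hred ?_
            rw [hxsplit]
            exact ⟨[a], [linv a], by simp⟩
          have hmidw : (FreeGroup.mk mid).toWord = mid := toWord_mk_red' hmidred
          have hxeq : FreeGroup.mk mid = (FreeGroup.mk [a])⁻¹ * x * FreeGroup.mk [a] := by
            have h7 : x = FreeGroup.mk [a] * FreeGroup.mk mid * FreeGroup.mk [linv a] := by
              conv_lhs => rw [← FreeGroup.mk_toWord (x := x), hxsplit]
              rw [← FreeGroup.mul_mk, ← FreeGroup.mul_mk]
            rw [h7, ← mk_singleton_inv]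
            group
          have hmidlen : mid.length ≤ M := by
            have h8 := congrArg List.length hxsplit
            simp at h8
            omega
          obtain ⟨z, v, hz, hzcr, hzlen⟩ := ih (FreeGroup.mk mid) (by rw [hmidw]; exact hmidlen)
          refine ⟨z, FreeGroup.mk [a] * v, ?_, hzcr, ?_⟩
          · rw [hz, hxeq]
            group
          · rw [hmidw] at hzlen
            have h8 := congrArg List.length hxsplit
            simp at h8
            have h9 : (a :: c :: rest2).length = x.toWord.length := by rw [hxw, hrest]
            simp only [List.length_cons] at h9 ⊢
            omega

theorem exists_cyc_red (x : FreeGroup α) :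
    ∃ z v : FreeGroup α, z = v⁻¹ * x * v ∧ CR z.toWord ∧
      z.toWord.length ≤ x.toWord.length :=
  exists_cyc_red_aux x.toWord.length x le_rfl

lemma eq_linv_symm {a b : α × Bool} (h : a = linv b) : b = linv a := by
  rw [h, linv_linv]

theorem core (x0 : α) (u : List (α × Bool)) (hu : u ≠ [])
    (sb tb : Bool) (ns nt : ℕ)
    (hCRW : CR (u ++ List.replicate ns (x0, sb)))
    (hCRW' : CR (FreeGroup.invRev u ++ List.replicate nt (x0, tb)))
    (r : ℕ)
    (hrot : FreeGroup.invRev u ++ List.replicate nt (x0, tb)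
      = (u ++ List.replicate ns (x0, sb)).rotate r) : False := by
  set W := u ++ List.replicate ns (x0, sb) with hWdef
  set W' := FreeGroup.invRev u ++ List.replicate nt (x0, tb) with hW'def
  have hp : 0 < u.length := List.length_pos_iff.mpr hu
  set p := u.length with hpdef
  set L := W.length with hLdef
  have hL : L = p + ns := by rw [hLdef, hWdef]; simp [hpdef]
  have hpL : p ≤ L := by omega
  have hL0 : 0 < L := by omega
  have hlen' : W'.length = p + nt := by rw [hW'def]; simp [FreeGroup.invRev, hpdef]
  have hnt : ns = nt := by
    have := congrArg List.length hrot
    rw [hlen', List.length_rotate] at this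
    omega
  subst hnt
  -- normalize r
  set r' := r % L with hr'def
  have hr' : r' < L := Nat.mod_lt _ hL0
  have hrot' : W' = W.rotate r' := by
    rw [hr'def, hLdef, List.rotate_mod]
    exact hrot
  -- getters
  set F : ℕ → α × Bool := fun j => (W[j]?).getD (x0, true) with hFdef
  set F' : ℕ → α × Bool := fun j => (W'[j]?).getD (x0, true) with hF'def
  have hFe : ∀ j (hj : j < L), F j = W[j]'hj := by
    intro j hj
    rw [hFdef]
    simp only []
    rw [List.getElem?_eq_getElem hj]
    rfl
  have hF'e : ∀ j (hj : j < W'.length), F' j = W'[j]'hj := by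
    intro j hj
    rw [hF'def]
    simp only []
    rw [List.getElem?_eq_getElem hj]
    rfl
  -- rotation relation
  have Rot : ∀ j k : ℕ, j < L → k < L → (j + r' = k ∨ j + r' = k + L) → F' j = F k := by
    intro j k hj hk hdis
    have hjW' : j < W'.length := by omega
    have hmod : (j + r') % L = k := by
      rcases hdis with h1 | h1
      · rw [h1]; exact Nat.mod_eq_of_lt hk
      · rw [h1, Nat.add_mod_right]; exact Nat.mod_eq_of_lt hk
    rw [hF'def, hFdef]
    simp only []
    rw [hrot']
    rw [List.getElem?_rotate (by omega : j < W.length)]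
    rw [← hLdef, hmod]
  -- u values
  have hUval : ∀ j, j < p → F j = (u[j]?).getD (x0, true) := by
    intro j hj
    rw [hFdef]
    simp only []
    rw [hWdef, List.getElem?_append_left (by omega : j < u.length)]
  -- B-part of W
  have hBval : ∀ j, p ≤ j → j < L → F j = (x0, sb) := by
    intro j h1 h2
    rw [hFdef]
    simp only []
    rw [hWdef, List.getElem?_append_right (by omega : u.length ≤ j)]
    rw [List.getElem?_replicate_of_lt (by simp only [← hpdef]; omega)]
    rfl
  -- mirror relation on u-part
  have hMir : ∀ j k, j < p → k < p → j + k = p - 1 → F' j = linv (F k) := by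
    intro j k hj hk hjk
    have hjW' : j < W'.length := by omega
    rw [hF'def, hFdef]
    simp only []
    rw [hW'def, List.getElem?_append_left
      (by rw [invRev_eq_map_reverse]; simp only [List.length_reverse, List.length_map]; omega)]
    rw [invRev_eq_map_reverse]
    rw [List.getElem?_reverse (by simp only [List.length_map]; omega)]
    simp only [List.length_map]
    have hidx : p - 1 - j = k := by omega
    rw [hidx]
    rw [List.getElem?_map]
    rw [hWdef, List.getElem?_append_left (by omega : k < u.length)]
    rcases List.getElem?_eq_some_iff.mpr ⟨(by omega : k < u.length), rfl⟩ with _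
    rw [List.getElem?_eq_getElem (by omega : k < u.length)]
    rfl
  -- B-part of W'
  have hB'val : ∀ j, p ≤ j → j < L → F' j = (x0, tb) := by
    intro j h1 h2
    rw [hF'def]
    simp only []
    rw [hW'def, List.getElem?_append_right
      (by rw [invRev_eq_map_reverse]; simp only [List.length_reverse, List.length_map]; omega)]
    rw [invRev_eq_map_reverse]
    simp only [List.length_reverse, List.length_map]
    rw [List.getElem?_replicate_of_lt (by simp only [← hpdef]; omega)]
    rfl
  by_cases hcase : ns = 0 ∨ tb = !sb
  · -- UNIFORM CASE
    have hUnif : ∀ j k, j < L → k < L → (j + k = p - 1 ∨ j + k = p - 1 + L) → F' j = linv (F k) := by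
      intro j k hj hk hjk
      by_cases hjp : j < p
      · have hk2 : k < p := by omega
        have hjk2 : j + k = p - 1 := by omega
        exact hMir j k hjp hk2 hjk2
      · -- j in B-part; only possible if ns > 0, then tb = !sb
        have hns : ns ≠ 0 := by omega
        have htb : tb = !sb := by tauto
        have hkB : p ≤ k := by omega
        rw [hB'val j (by omega) hj, hBval k hkB hk, htb]
        rfl
    -- combined: F k1 = linv (F k2)
    have hComb : ∀ j k1 k2, j < L → k1 < L → k2 < L →
        (j + r' = k1 ∨ j + r' = k1 + L) →
        (j + k2 = p - 1 ∨ j + k2 = p - 1 + L) → F k1 = linv (F k2) := by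
      intro j k1 k2 hj hk1 hk2 hd1 hd2
      rw [← Rot j k1 hj hk1 hd1]
      exact hUnif j k2 hj hk2 hd2
    -- solve
    set E := p - 1 + r' with hEdef
    set c := if E < L then E else E - L with hcdef
    have hcL : c < L := by rw [hcdef]; split_ifs <;> omega
    have hcE : c = E ∨ c + L = E := by rw [hcdef]; split_ifs <;> omega
    by_cases hpar : c % 2 = 0
    · -- fixed point: k1 = k2 = q := c / 2
      set q := c / 2 with hqdef
      have hq : q < L := by omega
      obtain ⟨j, hj, hd1, hd2⟩ : ∃ j, j < L ∧ (j + r' = q ∨ j + r' = q + L) ∧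
          (j + q = p - 1 ∨ j + q = p - 1 + L) := by
        by_cases hcmp : q ≤ p - 1
        · exact ⟨p - 1 - q, by omega, by omega, by omega⟩
        · exact ⟨p - 1 + L - q, by omega, by omega, by omega⟩
      have := hComb j q q hj hq hq hd1 hd2
      exact ne_linv_self _ this
    · -- adjacent: k1 = q, k2 = q + 1 (cyclically)
      set q := (c - 1) / 2 with hqdef
      have hq : q < L := by omega
      set q2 := if q + 1 < L then q + 1 else 0 with hq2def
      have hq2 : q2 < L := by rw [hq2def]; split_ifs <;> omega
      obtain ⟨j, hj, hd1, hd2⟩ : ∃ j, j < L ∧ (j + r' = q ∨ j + r' = q + L) ∧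
          (j + q2 = p - 1 ∨ j + q2 = p - 1 + L) := by
        rw [hq2def]
        split_ifs with hsplit
        · by_cases hcmp : q + 1 ≤ p - 1
          · exact ⟨p - 1 - (q + 1), by omega, by omega, by omega⟩
          · exact ⟨p - 1 + L - (q + 1), by omega, by omega, by omega⟩
        · exact ⟨p - 1, by omega, by omega, by omega⟩
      have hrel := hComb j q q2 hj hq hq2 hd1 hd2
      -- W[q] = linv (W[q2]) so W[q2] = linv (W[q]) : contradicts cyclic reducedness
      rw [hFe q hq, hFe q2 hq2] at hrel
      exact cycAdj hCRW hq hq2 (by rw [hq2def]; split_ifs <;> omega) (eq_linv_symm hrel)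
  · -- FLIP CASE : ns > 0, tb = sb
    push_neg at hcase
    obtain ⟨hns, htb⟩ := hcase
    have htb' : tb = sb := by
      cases sb <;> cases tb <;> simp_all
    subst htb'
    have hpltL : p < L := by omega
    have hFlip : ∀ j k1 k2, j < L → k1 < L → k2 < L →
        (j + r' = k1 ∨ j + r' = k1 + L) →
        (j + k2 = p - 1 ∨ j + k2 = p - 1 + L) →
        F k1 = (if j < p then linv (F k2) else F k2) := by
      intro j k1 k2 hj hk1 hk2 hd1 hd2
      rw [← Rot j k1 hj hk1 hd1]
      split_ifs with hjp
      · have hk2p : k2 < p := by omega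
        exact hMir j k2 hjp hk2p (by omega)
      · have hk2B : p ≤ k2 := by omega
        rw [hB'val j (by omega) hj, hBval k2 hk2B hk2]
    by_cases hr0 : r' = 0
    · -- mirror within u
      by_cases hpar : p % 2 = 1
      · set q := (p - 1) / 2 with hqdef
        have hq : q < L := by omega
        have := hFlip q q q hq hq hq (by omega) (by omega)
        rw [if_pos (by omega)] at this
        exact ne_linv_self _ this
      · -- p even
        set q := p / 2 with hqdef
        have hq : q < L := by omega
        have hq1 : q - 1 < L := by omega
        have := hFlip q q (q - 1) hq hq hq1 (by omega) (by omega)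
        rw [if_pos (by omega)] at this
        rw [hFe q hq, hFe (q - 1) hq1] at this
        exact cycAdj hCRW hq1 hq (by omega) this
    · -- r' ≠ 0 : boundary contradiction
      set a1 := if p - 1 + r' < L then p - 1 + r' else p - 1 + r' - L with ha1def
      have ha1 : a1 < L := by rw [ha1def]; split_ifs <;> omega
      have inst1 := hFlip (p - 1) a1 0 (by omega) ha1 (by omega)
        (by rw [ha1def]; split_ifs <;> omega) (by omega)
      rw [if_pos (by omega)] at inst1
      have inst2 := hFlip (L - r') 0 a1 (by omega) (by omega) ha1
        (by omega) (by rw [ha1def]; split_ifs <;> omega)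
      have hj2p : L - r' < p := by
        by_contra hc
        rw [if_neg (by omega)] at inst2
        rw [inst2] at inst1
        exact ne_linv_self _ inst1
      set a2 := if p + r' < L then p + r' else p + r' - L with ha2def
      have ha2 : a2 < L := by rw [ha2def]; split_ifs <;> omega
      have inst3 := hFlip p a2 (L - 1) (by omega) ha2 (by omega)
        (by rw [ha2def]; split_ifs <;> omega) (by omega)
      rw [if_neg (by omega)] at inst3
      have inst4 := hFlip (L - 1 - r') (L - 1) a2 (by omega) (by omega) ha2
        (by omega) (by rw [ha2def]; split_ifs <;> omega)
      have hj4p : ¬ (L - 1 - r' < p) := by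
        intro hc
        rw [if_pos (by omega)] at inst4
        rw [inst3] at inst4
        exact ne_linv_self _ inst4
      omega

theorem rot_of_conj (w x y : FreeGroup α) (hx : CR x.toWord) (hy : CR y.toWord)
    (h : y = w⁻¹ * x * w) : ∃ r, y.toWord = x.toWord.rotate r :=
  rot_of_conj_aux w.toWord.length w x y le_rfl hx hy h

lemma CR_invRev {l : List (α × Bool)} (h : CR l) : CR (FreeGroup.invRev l) := by
  refine ⟨red'_invRev h.1, ?_⟩
  intro a ha b hb
  rw [getLast?_invRev] at ha
  rw [head?_invRev] at hb
  obtain ⟨a0, ha0, rfl⟩ := Option.map_eq_some_iff.mp (Option.mem_def.mp ha)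
  obtain ⟨b0, hb0, rfl⟩ := Option.map_eq_some_iff.mp (Option.mem_def.mp hb)
  intro hc
  rw [linv_linv] at hc
  exact h.2 b0 hb0 a0 ha0 hc.symm


end Gen
-- specialized to Option (Fin n)
variable {n : ℕ}

abbrev A (n : ℕ) := Option (Fin n)

lemma run_letter_none {k : ℤ} {a : A n × Bool} (ha : a ∈ runB (none : A n) k) :
    a.1 = none := by
  rw [runB] at ha
  have := List.eq_of_mem_replicate ha
  rw [this]

lemma red'_cat_run {l : List (A n × Bool)} (hred : Red' l)
    (hlast : ∀ a ∈ l.getLast?, a.1 ≠ (none : A n)) (k : ℤ) :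
    Red' (l ++ runB (none : A n) k) := by
  rw [Red', List.isChain_append]
  refine ⟨hred, red'_replicate _ _, ?_⟩
  intro x hx y hy
  have hy1 : y.1 = none := run_letter_none (List.mem_of_mem_head? hy)
  intro hc
  apply hlast x hx
  have : y.1 = (linv x).1 := by rw [hc]
  rw [hy1] at this
  exact this.symm

lemma cr_cat_run {l : List (A n × Bool)} (hl : l ≠ []) (hred : Red' l)
    (hhead : ∀ a ∈ l.head?, a.1 ≠ (none : A n))
    (hlast : ∀ a ∈ l.getLast?, a.1 ≠ (none : A n)) {k : ℤ} (hk : k ≠ 0) :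
    CR (l ++ runB (none : A n) k) := by
  refine ⟨red'_cat_run hred hlast k, ?_⟩
  intro a ha b hb
  have hrun_ne : runB (none : A n) k ≠ [] := by
    rw [runB]
    simp only [ne_eq, List.replicate_eq_nil_iff]
    omega
  have ha1 : a.1 = none := by
    rw [List.getLast?_append_of_ne_nil _ hrun_ne] at ha
    exact run_letter_none (List.mem_of_mem_getLast? ha)
  have hb' : b ∈ l.head? := by
    rwa [List.head?_append_of_ne_nil _ hl] at hb
  intro hc
  apply hhead b hb'
  rw [hc]
  exact ha1

lemma uniform_of_red' :
    ∀ (l : List (A n × Bool)) (b : Bool), Red' ((none, b) :: l) →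
      (∀ a ∈ l, a.1 = (none : A n)) →
      (none, b) :: l = List.replicate (l.length + 1) ((none : A n), b) := by
  intro l
  induction l with
  | nil => intro b _ _; rfl
  | cons c t ih =>
    intro b hred hall
    have hc1 : c.1 = none := hall c (by simp)
    have hcb : c = (none, b) := by
      have h2 := (List.isChain_cons_cons.mp hred).1
      obtain ⟨c1, c2⟩ := c
      simp only at hc1
      subst hc1
      have : c2 ≠ !b := by
        intro hcc
        exact h2 (by rw [hcc]; rfl)
      have : c2 = b := by
        cases c2 <;> cases b <;> simp_all
      rw [this]
    subst hcb
    have := ih b (List.IsChain.tail hred) (fun a ha => hall a (by simp [ha]))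
    rw [List.replicate_succ]
    rw [List.length_cons]
    rw [← this]

lemma all_none_zpow (l : List (A n × Bool)) (hred : Red' l)
    (hall : ∀ a ∈ l, a.1 = (none : A n)) :
    ∃ k : ℤ, FreeGroup.mk l = (FreeGroup.of (none : A n)) ^ k := by
  cases l with
  | nil => exact ⟨0, rfl⟩
  | cons c t =>
    have hc1 : c.1 = none := hall c (by simp)
    obtain ⟨c1, c2⟩ := c
    simp only at hc1
    subst hc1
    have huni := uniform_of_red' t c2 hred (fun a ha => hall a (by simp [ha]))
    rw [huni]
    cases c2 with
    | true => exact ⟨(t.length + 1 : ℕ), by rw [mk_replicate_true, zpow_natCast]⟩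
    | false =>
      refine ⟨-(t.length + 1 : ℕ), ?_⟩
      rw [mk_replicate_false, zpow_neg, zpow_natCast, inv_pow]



end NCG

open NCG in
/-- Let `F` be the free group on generators `α_1,…,α_n, β` (modelled on `Option (Fin n)`,
with `β` the generator `none`), and `B = ⟨β⟩`. If `c = γλ` is a reduced word with
`γ ∈ F ∖ B` and `λ ∈ B`, then `c` is not conjugate in `F` to any reduced word of the
form `γ⁻¹λ'` with `λ' ∈ B`. -/
theorem not_conj_to_inverse_gamma (n : ℕ)
    (γ lam : FreeGroup (Option (Fin n)))
    (hγ : γ ∉ Subgroup.zpowers (FreeGroup.of (none : Option (Fin n))))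
    (hlam : lam ∈ Subgroup.zpowers (FreeGroup.of (none : Option (Fin n))))
    (hred : (γ * lam).toWord = γ.toWord ++ lam.toWord) :
    ¬ ∃ (lam' w : FreeGroup (Option (Fin n))),
      lam' ∈ Subgroup.zpowers (FreeGroup.of (none : Option (Fin n))) ∧
      (γ⁻¹ * lam').toWord = γ⁻¹.toWord ++ lam'.toWord ∧
      w⁻¹ * (γ * lam) * w = γ⁻¹ * lam' := by
  classical
  rintro ⟨lam', w, hlam', _hred', hconj⟩
  obtain ⟨m, hm⟩ := Subgroup.mem_zpowers_iff.mp hlam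
  obtain ⟨m', hm'⟩ := Subgroup.mem_zpowers_iff.mp hlam'
  -- decompose γ's word
  set G := γ.toWord with hGdef
  have hGred : Red' G := red'_toWord γ
  set pr : (Option (Fin n) × Bool) → Bool := fun a => a.1.isNone with hprdef
  set P := G.takeWhile pr with hPdef
  set G1 := G.dropWhile pr with hG1def
  have hsplit1 : G = P ++ G1 := (List.takeWhile_append_dropWhile (p := pr) (l := G)).symm
  set Q := G1.reverse.takeWhile pr with hQdef
  set R1 := G1.reverse.dropWhile pr with hR1def
  set u := R1.reverse with hudef
  set S := Q.reverse with hSdef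
  have hsplit2 : G1 = u ++ S := by
    rw [hudef, hSdef, hQdef, hR1def, ← List.reverse_append,
      List.takeWhile_append_dropWhile, List.reverse_reverse]
  have hPnone : ∀ a ∈ P, a.1 = (none : Option (Fin n)) := by
    intro a ha
    have := List.mem_takeWhile_imp ha
    rw [hprdef] at this
    exact Option.isNone_iff_eq_none.mp this
  have hSnone : ∀ a ∈ S, a.1 = (none : Option (Fin n)) := by
    intro a ha
    rw [hSdef, List.mem_reverse] at ha
    have := List.mem_takeWhile_imp ha
    rw [hprdef] at this
    exact Option.isNone_iff_eq_none.mp this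
  have hured : Red' u := by
    refine Red'.infix hGred ⟨P, S, ?_⟩
    rw [hsplit1, hsplit2, List.append_assoc]
  -- u is nonempty
  have hune : u ≠ [] := by
    intro hc
    have hallG : ∀ a ∈ G, a.1 = (none : Option (Fin n)) := by
      intro a ha
      rw [hsplit1, hsplit2, hc] at ha
      simp only [List.nil_append, List.mem_append] at ha
      rcases ha with h1 | h2
      · exact hPnone a h1
      · exact hSnone a h2
    obtain ⟨k, hk⟩ := all_none_zpow G hGred hallG
    apply hγ
    refine Subgroup.mem_zpowers_iff.mpr ⟨k, ?_⟩
    rw [← hk, hGdef, FreeGroup.mk_toWord]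
  have hR1ne : R1 ≠ [] := by
    intro hc
    exact hune (by rw [hudef, hc]; rfl)
  have hG1ne : G1 ≠ [] := by
    intro hc
    apply hR1ne
    rw [hR1def, hc]
    rfl
  -- last of u is an α-letter
  have hulast : ∀ a ∈ u.getLast?, a.1 ≠ (none : Option (Fin n)) := by
    intro a ha
    rw [hudef, List.getLast?_reverse] at ha
    have h0 := List.head?_dropWhile_not pr G1.reverse
    rw [← hR1def] at h0
    rw [Option.mem_def] at ha
    rw [ha] at h0
    simp only [hprdef] at h0
    intro hc
    rw [Option.isNone_iff_eq_none.mpr hc] at h0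
    exact Bool.true_eq_false.mp h0
  -- head of u is an α-letter
  have huhead : ∀ a ∈ u.head?, a.1 ≠ (none : Option (Fin n)) := by
    intro a ha
    have hhu : u.head? = G1.head? := by
      rw [hsplit2, List.head?_append_of_ne_nil _ hune]
    rw [hhu] at ha
    have h0 := List.head?_dropWhile_not pr G
    rw [← hG1def] at h0
    rw [Option.mem_def] at ha
    rw [ha] at h0
    simp only [hprdef] at h0
    intro hc
    rw [Option.isNone_iff_eq_none.mpr hc] at h0
    exact Bool.true_eq_false.mp h0
  -- invRev u boundary letters
  have hiuhead : ∀ a ∈ (FreeGroup.invRev u).head?, a.1 ≠ (none : Option (Fin n)) := by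
    intro a ha
    rw [head?_invRev] at ha
    obtain ⟨b, hb, rfl⟩ := Option.map_eq_some_iff.mp (Option.mem_def.mp ha)
    exact hulast b hb
  have hiulast : ∀ a ∈ (FreeGroup.invRev u).getLast?, a.1 ≠ (none : Option (Fin n)) := by
    intro a ha
    rw [getLast?_invRev] at ha
    obtain ⟨b, hb, rfl⟩ := Option.map_eq_some_iff.mp (Option.mem_def.mp ha)
    exact huhead b hb
  have hiune : FreeGroup.invRev u ≠ [] := by
    rw [FreeGroup.invRev]
    simp only [ne_eq, List.reverse_eq_nil_iff, List.map_eq_nil_iff]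
    exact hune
  -- element decomposition of γ
  obtain ⟨ka, hka⟩ := all_none_zpow P (Red'.infix hGred ⟨[], G1, by rw [hsplit1]; rfl⟩) hPnone
  obtain ⟨kb, hkb⟩ := all_none_zpow S
    (Red'.infix hGred ⟨P ++ u, [], by rw [hsplit1, hsplit2]; simp [List.append_assoc]⟩) hSnone
  have hγfact : γ = (FreeGroup.of (none : Option (Fin n))) ^ ka * FreeGroup.mk u * (FreeGroup.of (none : Option (Fin n))) ^ kb := by
    rw [← hka, ← hkb]
    rw [FreeGroup.mul_mk, FreeGroup.mul_mk]
    rw [List.append_assoc, ← hsplit2, ← hsplit1, hGdef, FreeGroup.mk_toWord]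
  set s : ℤ := ka + kb + m with hsdef
  set t : ℤ := m' - ka - kb with htdef
  set x := FreeGroup.mk u * (FreeGroup.of (none : Option (Fin n))) ^ s with hxdef
  set y := (FreeGroup.mk u)⁻¹ * (FreeGroup.of (none : Option (Fin n))) ^ t with hydef
  have hxc : γ * lam = (FreeGroup.of (none : Option (Fin n))) ^ ka * x * (FreeGroup.of (none : Option (Fin n))) ^ (-ka) := by
    rw [hxdef, hγfact, ← hm, hsdef]
    group
  have hyc : γ⁻¹ * lam' = (FreeGroup.of (none : Option (Fin n))) ^ (-kb) * y * (FreeGroup.of (none : Option (Fin n))) ^ kb := by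
    rw [hydef, hγfact, ← hm', htdef]
    group
  set v := (FreeGroup.of (none : Option (Fin n))) ^ (-ka) * w * (FreeGroup.of (none : Option (Fin n))) ^ (-kb) with hvdef
  have hconj2 : y = v⁻¹ * x * v := by
    have h3 := hconj
    rw [hxc, hyc] at h3
    have h4 : y = (FreeGroup.of (none : Option (Fin n))) ^ kb * (w⁻¹ * ((FreeGroup.of (none : Option (Fin n))) ^ ka * x * (FreeGroup.of (none : Option (Fin n))) ^ (-ka)) * w) * (FreeGroup.of (none : Option (Fin n))) ^ (-kb) := by
      rw [h3]
      group
    rw [h4, hvdef]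
    group
  -- words of x and y
  have hxmk : x = FreeGroup.mk (u ++ runB (none : Option (Fin n)) s) := by
    rw [hxdef, ← mk_runB, FreeGroup.mul_mk]
  have hymk : y = FreeGroup.mk (FreeGroup.invRev u ++ runB (none : Option (Fin n)) t) := by
    rw [hydef, ← mk_runB, FreeGroup.inv_mk, FreeGroup.mul_mk]
  have hxw : x.toWord = u ++ runB (none : Option (Fin n)) s := by
    rw [hxmk]
    exact toWord_mk_red' (red'_cat_run hured hulast s)
  have hyw : y.toWord = FreeGroup.invRev u ++ runB (none : Option (Fin n)) t := by
    rw [hymk]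
    exact toWord_mk_red' (red'_cat_run (red'_invRev hured) hiulast t)
  -- case analysis
  by_cases hs0 : s = 0
  · by_cases ht0 : t = 0
    · -- case 4 : x ~ x⁻¹
      have hyx : y = x⁻¹ := by
        rw [hxdef, hydef, hs0, ht0]
        simp
      obtain ⟨z, vz, hz, hzCR, hzlen⟩ := exists_cyc_red x
      have hxne1 : x ≠ 1 := by
        intro hc
        rw [hc] at hxw
        rw [FreeGroup.toWord_one] at hxw
        rw [hs0] at hxw
        simp [runB] at hxw
        exact hune hxw
      have hzne1 : z ≠ 1 := by
        intro hc
        rw [hc] at hz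
        apply hxne1
        have : vz * (1:FreeGroup (Option (Fin n))) * vz⁻¹ = x := by rw [hz]; group
        rw [← this]
        group
      have e1 : z⁻¹ = vz⁻¹ * x⁻¹ * vz := by rw [hz]; group
      have e2 : x⁻¹ = v⁻¹ * x * v := by rw [← hyx]; exact hconj2
      have hx_z : x = vz * z * vz⁻¹ := by rw [hz]; group
      have hfin : z⁻¹ = (vz⁻¹ * v * vz)⁻¹ * z * (vz⁻¹ * v * vz) := by
        calc z⁻¹ = vz⁻¹ * x⁻¹ * vz := e1
          _ = vz⁻¹ * (v⁻¹ * x * v) * vz := by rw [← e2]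
          _ = vz⁻¹ * (v⁻¹ * (vz * z * vz⁻¹) * v) * vz := by rw [← hx_z]
          _ = (vz⁻¹ * v * vz)⁻¹ * z * (vz⁻¹ * v * vz) := by group
      have hizCR : CR (z⁻¹).toWord := by
        rw [FreeGroup.toWord_inv]
        exact CR_invRev hzCR
      obtain ⟨r, hr⟩ := rot_of_conj _ z z⁻¹ hzCR hizCR hfin
      rw [FreeGroup.toWord_inv] at hr
      have hzwne : z.toWord ≠ [] := by
        intro hc
        exact hzne1 (FreeGroup.toWord_eq_nil_iff.mp hc)
      exact core (none : Option (Fin n)) z.toWord hzwne true true 0 0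
        (by simpa using hzCR) (by simpa using CR_invRev hzCR) r (by simpa using hr)
    · -- case 2 : s = 0, t ≠ 0
      have hx1 : x = FreeGroup.mk u := by
        rw [hxdef, hs0]
        simp
      have hCRy : CR y.toWord := by
        rw [hyw]
        exact cr_cat_run hiune (red'_invRev hured) hiuhead hiulast ht0
      obtain ⟨z, vz, hz, hzCR, hzlen⟩ := exists_cyc_red x
      have hconj3 : y = (vz⁻¹ * v)⁻¹ * z * (vz⁻¹ * v) := by
        rw [hconj2, hz]
        group
      obtain ⟨r, hr⟩ := rot_of_conj _ z y hzCR hCRy hconj3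
      have hlen1 := congrArg List.length hr
      rw [List.length_rotate] at hlen1
      have hlen2 : y.toWord.length = u.length + t.natAbs := by
        rw [hyw]
        simp [runB, FreeGroup.invRev]
      have hlen3 : x.toWord.length = u.length := by
        rw [hx1, toWord_mk_red' hured]
      have htpos : 1 ≤ t.natAbs := by
        rcases Int.natAbs_pos.mpr ht0 with h
        omega
      omega
  · by_cases ht0 : t = 0
    · -- case 3 : s ≠ 0, t = 0
      have hy1 : y = (FreeGroup.mk u)⁻¹ := by
        rw [hydef, ht0]
        simp
      have hCRx : CR x.toWord := by
        rw [hxw]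
        exact cr_cat_run hune hured huhead hulast hs0
      obtain ⟨z, vz, hz, hzCR, hzlen⟩ := exists_cyc_red y
      have hconj3 : x = (vz⁻¹ * v⁻¹)⁻¹ * z * (vz⁻¹ * v⁻¹) := by
        rw [hz, hconj2]
        group
      obtain ⟨r, hr⟩ := rot_of_conj _ z x hzCR hCRx hconj3
      have hlen1 := congrArg List.length hr
      rw [List.length_rotate] at hlen1
      have hlen2 : x.toWord.length = u.length + s.natAbs := by
        rw [hxw]
        simp [runB]
      have hlen3 : y.toWord.length = u.length := by
        rw [hy1, FreeGroup.toWord_inv, toWord_mk_red' hured]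
        simp [FreeGroup.invRev]
      have hspos : 1 ≤ s.natAbs := by
        rcases Int.natAbs_pos.mpr hs0 with h
        omega
      omega
    · -- case 1 : s ≠ 0, t ≠ 0
      have hCRx : CR x.toWord := by
        rw [hxw]
        exact cr_cat_run hune hured huhead hulast hs0
      have hCRy : CR y.toWord := by
        rw [hyw]
        exact cr_cat_run hiune (red'_invRev hured) hiuhead hiulast ht0
      obtain ⟨r, hr⟩ := rot_of_conj v x y hCRx hCRy hconj2
      rw [hxw, hyw] at hr
      exact core (none : Option (Fin n)) u hune (decide (0 < s)) (decide (0 < t))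
        s.natAbs t.natAbs
        (by rw [← runB]; exact (hxw ▸ hCRx : CR (u ++ runB _ s)))
        (by rw [← runB]; exact (hyw ▸ hCRy))
        r (by rw [← runB, ← runB]; exact hr)
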